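/- Factorization at an interior trunk (Proposition, part 1): let G be a Gauss diagram on n strings, I = {i_1 < i_2 < … < i_r} ⊆ {1,…,n}, and 1 < k < r. Then Z_{I∖{i_k}, i_k}(G) = Z_{I_k^-, i_k}(G) · Z_{I_k^+, i_k}(G), where I_k^- = I ∩ [1, i_k − 1] = {i_1,…,i_{k−1}} and I_k^+ = I ∩ [i_k + 1, n] = {i_{k+1},…,i_r}. (A planar tree with trunk on i_k consists of a left half-tree with leaves on I_k^- and a right half-tree with leaves on I_k^+.) -/

import Mathlib

/-!
Combinatorial Gauss diagrams on `n` strings and the tree invariants `Z I j`.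

A Gauss diagram is encoded by a finite set of arrows; each arrow records the
string (an element of `Fin n`) and the position (a rational number, increasing
in the direction of the orientation of the string) of its tail and of its head,
together with a sign `±1`.  Only the induced combinatorial data (linear order of
the endpoints along each string, the tail/head pairing and the signs) is ever
used by the definitions below.

The tree invariant `Z I j G = ∑_{A ∈ 𝒜_{I,j}} sign(A) ⟨A, G⟩` is computed as a
signed count over all subsets `S` of the arrows of `G` that form a planar tree
diagram with leaves on `I` and trunk on `j`: each pair `(A, φ)` of a planar tree
diagram `A ∈ 𝒜_{I,j}` together with an embedding `φ : A → G` corresponds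
bijectively to the subset `S = Im φ` of the arrows of `G`, which is itself a
planar tree diagram with leaves on `I` and trunk on `j`; the contribution of the
pair to the sum is `sign(A) · sign(φ) = (-1)^{#right-pointing arrows of S} · ∏_{a ∈ S} sign(a)`.
-/

open scoped Classical

/-- An arrow of a Gauss diagram on `n` strings: a tail endpoint, a head
endpoint (each given by the string it lies on and its position along that
string) and a sign. -/
structure GArrow (n : ℕ) where
  tailStr : Fin n
  tailPos : ℚ
  headStr : Fin n
  headPos : ℚ
  sign : ℤ
deriving DecidableEq

namespace GArrow

/-- The two endpoints of an arrow: `false` is the tail, `true` is the head. -/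
def ep {n : ℕ} (a : GArrow n) : Bool → Fin n × ℚ
  | false => (a.tailStr, a.tailPos)
  | true => (a.headStr, a.headPos)

end GArrow

/-- A Gauss diagram on `n` strings: a finite set of signed arrows with all
endpoints pairwise distinct, and all signs equal to `±1`. -/
structure GaussDiagram (n : ℕ) where
  arrows : Finset (GArrow n)
  sign_pm : ∀ a ∈ arrows, a.sign = 1 ∨ a.sign = -1
  endpoints_distinct : ∀ a ∈ arrows, ∀ b ∈ arrows, ∀ s t : Bool,
    a.ep s = b.ep t → a = b ∧ s = t

/-- `S` is a tree diagram with leaves on `I` and trunk on `j`: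
* the head and the tail of every arrow lie on different strings;
* for each `i ∈ I` there is exactly one arrow tail on string `i`, and there are
  no arrow tails on strings outside `I`;
* every arrow head lies on a string of `I ∪ {j}`;
* on each string `i ∈ I` all arrow heads precede the unique arrow tail. -/
def IsTreeDiagram {n : ℕ} (I : Finset (Fin n)) (j : Fin n)
    (S : Finset (GArrow n)) : Prop :=
  (∀ a ∈ S, a.tailStr ≠ a.headStr) ∧
  (∀ i ∈ I, ∃! a, a ∈ S ∧ a.tailStr = i) ∧
  (∀ a ∈ S, a.tailStr ∈ I) ∧
  (∀ a ∈ S, a.headStr ∈ I ∨ a.headStr = j) ∧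
  (∀ a ∈ S, ∀ b ∈ S, a.headStr = b.tailStr → a.headPos < b.tailPos)

/-- `ParentRel S s t` : string `s` is the parent of string `t` in the rooted
tree determined by the tree diagram `S`, i.e. the (unique) arrow with tail on
`t` has its head on `s`. -/
def ParentRel {n : ℕ} (S : Finset (GArrow n)) (s t : Fin n) : Prop :=
  ∃ a ∈ S, a.tailStr = t ∧ a.headStr = s

/-- `Descends S s k` : string `k` belongs to the subtree of string `s` (it is
`s` itself or an iterated child of `s`). -/
def Descends {n : ℕ} (S : Finset (GArrow n)) : Fin n → Fin n → Prop :=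
  Relation.ReflTransGen (ParentRel S)

/-- `S` is a *planar* tree diagram with leaves on `I` and trunk on `j`: the
rooted tree `T_S` determined by `S` can be drawn in the plane so that the
clockwise order of its leaves, starting from the root on string `j`, is the
order of the string numbers.  Combinatorially this says that:
* the parent relation makes the strings carrying the arrows into a tree rooted
  at `j` (every leaf string is an iterated child of `j`);
* the whole subtree hanging from an arrow lies on the same side of the string
  carrying the head of that arrow as its tail does;
* two subtrees hanging on the same side of a common string are ordered, along
  that string, compatibly with the order of the strings: for two arrow heads on
  the same string, with both tails on the left, the subtree attached closer to
  the beginning of the string is the one carrying the larger string numbers,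
  while for two tails on the right it is the one carrying the smaller string
  numbers. -/
def IsPlanarTreeDiagram {n : ℕ} (I : Finset (Fin n)) (j : Fin n)
    (S : Finset (GArrow n)) : Prop :=
  IsTreeDiagram I j S ∧
  (∀ i ∈ I, Relation.TransGen (ParentRel S) j i) ∧
  (∀ a ∈ S, ∀ k : Fin n, Descends S a.tailStr k →
    (a.tailStr < a.headStr ↔ k < a.headStr)) ∧
  (∀ a ∈ S, ∀ b ∈ S, a.headStr = b.headStr → a.headPos < b.headPos →
    ∀ k k' : Fin n, Descends S a.tailStr k → Descends S b.tailStr k' →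
      ((a.tailStr < a.headStr → b.tailStr < b.headStr → k' < k) ∧
       (a.headStr < a.tailStr → b.headStr < b.tailStr → k < k')))

/-- The sign `(-1)^q` of an (embedded) arrow diagram, where `q` is the number
of right-pointing arrows (tail on a string of smaller number than the head). -/
noncomputable def treeSign {n : ℕ} (S : Finset (GArrow n)) : ℤ :=
  (-1) ^ (S.filter fun a => a.tailStr < a.headStr).card

/-- The tree invariant `Z_{I,j}(G) = ∑_{A ∈ 𝒜_{I,j}} sign(A)·⟨A,G⟩`, computed
as the signed count of embedded planar tree diagrams with leaves on `I` and
trunk on `j` inside `G`.  In particular `Z ∅ j G = 1` (only `S = ∅`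
contributes). -/
noncomputable def Z {n : ℕ} (I : Finset (Fin n)) (j : Fin n)
    (G : GaussDiagram n) : ℤ :=
  ∑ S ∈ G.arrows.powerset,
    if IsPlanarTreeDiagram I j S then treeSign S * ∏ a ∈ S, a.sign else 0


section FactorizationHelpers

variable {n : ℕ}

private lemma parentRel_mono {S T : Finset (GArrow n)} (h : S ⊆ T) {s t : Fin n}
    (hst : ParentRel S s t) : ParentRel T s t := by
  obtain ⟨a, ha, h1, h2⟩ := hst
  exact ⟨a, h ha, h1, h2⟩

private lemma descends_mono {S T : Finset (GArrow n)} (h : S ⊆ T) {s t : Fin n}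
    (hst : Descends S s t) : Descends T s t :=
  Relation.ReflTransGen.mono (r := ParentRel S) (p := ParentRel T) (fun _ _ => parentRel_mono h) _ _ hst

private lemma descends_restrict {S : Finset (GArrow n)} {p : Fin n → Prop}
    (hp : ∀ a ∈ S, p a.headStr → p a.tailStr) {s k : Fin n}
    (hd : Descends S s k) :
    p s → p k ∧ ∀ T : Finset (GArrow n), (∀ a ∈ S, p a.tailStr → a ∈ T) →
      Descends T s k := by
  induction hd using Relation.ReflTransGen.head_induction_on with
  | refl => exact fun hs => ⟨hs, fun T _ => Relation.ReflTransGen.refl⟩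
  | head h' h ih =>
    intro hs
    obtain ⟨a, haS, hat, hah⟩ := h'
    have hpt : p a.tailStr := hp a haS (by rw [hah]; exact hs)
    obtain ⟨hk, hd'⟩ := ih (by rw [← hat]; exact hpt)
    exact ⟨hk, fun T hT => Relation.ReflTransGen.head
      ⟨a, hT a haS hpt, hat, hah⟩ (hd' T hT)⟩

private lemma descends_propagate_up {S : Finset (GArrow n)} {p : Fin n → Prop} {i : Fin n}
    (hp1 : ∀ a ∈ S, a.headStr ≠ i → (p a.tailStr ↔ p a.headStr))
    (htails : ∀ a ∈ S, a.tailStr ≠ i) {s k : Fin n}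
    (hd : Descends S s k) : s ≠ i → p k → p s := by
  induction hd using Relation.ReflTransGen.head_induction_on with
  | refl => exact fun _ h => h
  | head h' h ih =>
    intro hs hk
    obtain ⟨a, haS, hat, hah⟩ := h'
    have hc := ih (by rw [← hat]; exact htails a haS) hk
    rw [← hat] at hc
    have hph := (hp1 a haS (by rw [hah]; exact hs)).1 hc
    rwa [hah] at hph

private lemma planar_side {L : Finset (Fin n)} {i : Fin n} {S : Finset (GArrow n)}
    (hS : IsPlanarTreeDiagram L i S) (hiL : i ∉ L) :
    ∀ a ∈ S, a.headStr ≠ i → (a.tailStr < i ↔ a.headStr < i) := by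
  obtain ⟨⟨t1, t2, t3, t4, t5⟩, tr, c3, c4⟩ := hS
  intro a ha hne
  obtain ⟨m, hm, hpar⟩ := Relation.TransGen.tail'_iff.1 (tr a.tailStr (t3 a ha))
  obtain ⟨c, hcS, hct, hch⟩ := hpar
  have hca : c = a := by
    obtain ⟨u, hu, huq⟩ := t2 a.tailStr (t3 a ha)
    rw [huq c ⟨hcS, hct⟩, ← huq a ⟨ha, rfl⟩]
  have hma : a.headStr = m := by rw [← hca]; exact hch
  subst hma
  rcases Relation.ReflTransGen.cases_head hm with h | ⟨t₁, hpar1, hd⟩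
  · exact absurd h.symm hne
  obtain ⟨b, hbS, hbt, hbh⟩ := hpar1
  have h1 := c3 b hbS a.headStr (by rw [hbt]; exact hd)
  have h2 := c3 b hbS a.tailStr (by rw [hbt]; exact hd.tail ⟨a, ha, rfl, rfl⟩)
  rw [hbh] at h1 h2
  exact h2.symm.trans h1

private lemma restrict_planar {L L' : Finset (Fin n)} {i : Fin n} {S S' : Finset (GArrow n)}
    (hS : IsPlanarTreeDiagram L i S) (hiL : i ∉ L) {p : Fin n → Prop}
    (hp1 : ∀ a ∈ S, a.headStr ≠ i → (p a.tailStr ↔ p a.headStr)) (hp2 : ¬ p i)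
    (hL' : ∀ x, x ∈ L' ↔ x ∈ L ∧ p x)
    (hS' : ∀ a, a ∈ S' ↔ a ∈ S ∧ p a.tailStr) :
    IsPlanarTreeDiagram L' i S' := by
  obtain ⟨⟨t1, t2, t3, t4, t5⟩, tr, c3, c4⟩ := hS
  have htails : ∀ a ∈ S, a.tailStr ≠ i := fun a ha h => hiL (h ▸ t3 a ha)
  have hp : ∀ a ∈ S, p a.headStr → p a.tailStr := fun a ha h =>
    (hp1 a ha fun e => hp2 (e ▸ h)).2 h
  have hsub : S' ⊆ S := fun a ha => ((hS' a).1 ha).1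
  refine ⟨⟨fun a ha => t1 a (hsub ha), ?_, ?_, ?_,
      fun a ha b hb h => t5 a (hsub ha) b (hsub hb) h⟩, ?_, ?_, ?_⟩
  · intro x hx
    obtain ⟨hxL, hpx⟩ := (hL' x).1 hx
    obtain ⟨a, ⟨haS, hat⟩, hau⟩ := t2 x hxL
    exact ⟨a, ⟨(hS' a).2 ⟨haS, by rw [hat]; exact hpx⟩, hat⟩,
      fun b hb => hau b ⟨hsub hb.1, hb.2⟩⟩
  · intro a ha
    obtain ⟨haS, hpa⟩ := (hS' a).1 ha
    exact (hL' _).2 ⟨t3 a haS, hpa⟩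
  · intro a ha
    obtain ⟨haS, hpa⟩ := (hS' a).1 ha
    by_cases hne : a.headStr = i
    · exact Or.inr hne
    · rcases t4 a haS with h | h
      · exact Or.inl ((hL' _).2 ⟨h, (hp1 a haS hne).1 hpa⟩)
      · exact Or.inr h
  · intro x hx
    obtain ⟨hxL, hpx⟩ := (hL' x).1 hx
    obtain ⟨m, hm, hpar⟩ := Relation.TransGen.tail'_iff.1 (tr x hxL)
    obtain ⟨a, haS, hat, hah⟩ := hpar
    have haF : a ∈ S' := (hS' a).2 ⟨haS, by rw [hat]; exact hpx⟩
    by_cases hmi : m = i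
    · exact Relation.TransGen.single ⟨a, haF, hat, by rw [hah, hmi]⟩
    · have hpm : p m := by
        have h := (hp1 a haS (by rw [hah]; exact hmi)).1 (by rw [hat]; exact hpx)
        rwa [hah] at h
      rcases Relation.ReflTransGen.cases_head hm with h | ⟨t₁, hpar1, hd⟩
      · exact absurd h.symm hmi
      obtain ⟨b, hbS, hbt, hbh⟩ := hpar1
      have ht₁ : p t₁ :=
        descends_propagate_up hp1 htails hd (by rw [← hbt]; exact htails b hbS) hpm
      have hd' := (descends_restrict hp hd ht₁).2 S'
        (fun c hc hpc => (hS' c).2 ⟨hc, hpc⟩)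
      exact Relation.TransGen.head
        ⟨b, (hS' b).2 ⟨hbS, by rw [hbt]; exact ht₁⟩, hbt, hbh⟩
        (Relation.TransGen.tail' hd' ⟨a, haF, hat, hah⟩)
  · intro a ha k hk
    exact c3 a (hsub ha) k (descends_mono hsub hk)
  · intro a ha b hb he hpos k k' hk hk'
    exact c4 a (hsub ha) b (hsub hb) he hpos k k'
      (descends_mono hsub hk) (descends_mono hsub hk')

private lemma union_planar {L₁ L₂ : Finset (Fin n)} {i : Fin n} {S₁ S₂ : Finset (GArrow n)}
    (h₁ : IsPlanarTreeDiagram L₁ i S₁) (h₂ : IsPlanarTreeDiagram L₂ i S₂)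
    (hL₁ : ∀ x ∈ L₁, x < i) (hL₂ : ∀ x ∈ L₂, i < x) :
    IsPlanarTreeDiagram (L₁ ∪ L₂) i (S₁ ∪ S₂) := by
  obtain ⟨⟨t1, t2, t3, t4, t5⟩, tr, c3, c4⟩ := h₁
  obtain ⟨⟨u1, u2, u3, u4, u5⟩, ur, d3, d4⟩ := h₂
  have tlt : ∀ a ∈ S₁, a.tailStr < i := fun a ha => hL₁ _ (t3 a ha)
  have ugt : ∀ a ∈ S₂, i < a.tailStr := fun a ha => hL₂ _ (u3 a ha)
  have hhd1 : ∀ a ∈ S₁, ¬ i < a.headStr := by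
    intro a ha h
    rcases t4 a ha with h' | h'
    · exact absurd h (asymm (hL₁ _ h'))
    · rw [h'] at h; exact lt_irrefl i h
  have hhd2 : ∀ a ∈ S₂, ¬ a.headStr < i := by
    intro a ha h
    rcases u4 a ha with h' | h'
    · exact absurd h (asymm (hL₂ _ h'))
    · rw [h'] at h; exact lt_irrefl i h
  have hpm : ∀ c ∈ S₁ ∪ S₂, c.headStr < i → c.tailStr < i := by
    intro c hc h
    rcases Finset.mem_union.1 hc with hc | hc
    · exact tlt c hc
    · exact absurd h (hhd2 c hc)
  have hpp : ∀ c ∈ S₁ ∪ S₂, i < c.headStr → i < c.tailStr := by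
    intro c hc h
    rcases Finset.mem_union.1 hc with hc | hc
    · exact absurd h (hhd1 c hc)
    · exact ugt c hc
  have hf1 : ∀ c ∈ S₁ ∪ S₂, c.tailStr < i → c ∈ S₁ := by
    intro c hc hlt
    rcases Finset.mem_union.1 hc with h | h
    · exact h
    · exact absurd hlt (asymm (ugt c h))
  have hf2 : ∀ c ∈ S₁ ∪ S₂, i < c.tailStr → c ∈ S₂ := by
    intro c hc hlt
    rcases Finset.mem_union.1 hc with h | h
    · exact absurd hlt (asymm (tlt c h))
    · exact h
  refine ⟨⟨?_, ?_, ?_, ?_, ?_⟩, ?_, ?_, ?_⟩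
  · intro a ha
    rcases Finset.mem_union.1 ha with h | h
    · exact t1 a h
    · exact u1 a h
  · intro x hx
    rcases Finset.mem_union.1 hx with hx' | hx'
    · obtain ⟨a, ⟨haS, hat⟩, hau⟩ := t2 x hx'
      refine ⟨a, ⟨Finset.mem_union_left _ haS, hat⟩, ?_⟩
      rintro b ⟨hb, hbt⟩
      rcases Finset.mem_union.1 hb with hb | hb
      · exact hau b ⟨hb, hbt⟩
      · exact absurd (hbt ▸ ugt b hb) (asymm (hL₁ x hx'))
    · obtain ⟨a, ⟨haS, hat⟩, hau⟩ := u2 x hx'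
      refine ⟨a, ⟨Finset.mem_union_right _ haS, hat⟩, ?_⟩
      rintro b ⟨hb, hbt⟩
      rcases Finset.mem_union.1 hb with hb | hb
      · exact absurd (hbt ▸ tlt b hb) (asymm (hL₂ x hx'))
      · exact hau b ⟨hb, hbt⟩
  · intro a ha
    rcases Finset.mem_union.1 ha with h | h
    · exact Finset.mem_union_left _ (t3 a h)
    · exact Finset.mem_union_right _ (u3 a h)
  · intro a ha
    rcases Finset.mem_union.1 ha with h | h
    · rcases t4 a h with h' | h'
      · exact Or.inl (Finset.mem_union_left _ h')
      · exact Or.inr h'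
    · rcases u4 a h with h' | h'
      · exact Or.inl (Finset.mem_union_right _ h')
      · exact Or.inr h'
  · intro a ha b hb h
    rcases Finset.mem_union.1 ha with ha' | ha' <;> rcases Finset.mem_union.1 hb with hb' | hb'
    · exact t5 a ha' b hb' h
    · exact absurd (h ▸ ugt b hb') (hhd1 a ha')
    · exact absurd (h ▸ tlt b hb') (hhd2 a ha')
    · exact u5 a ha' b hb' h
  · intro x hx
    rcases Finset.mem_union.1 hx with h | h
    · exact Relation.TransGen.mono (r := ParentRel S₁) (p := ParentRel (S₁ ∪ S₂)) (fun _ _ hh => parentRel_mono Finset.subset_union_left hh)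
        _ _ (tr x h)
    · exact Relation.TransGen.mono (r := ParentRel S₂) (p := ParentRel (S₁ ∪ S₂)) (fun _ _ hh => parentRel_mono Finset.subset_union_right hh)
        _ _ (ur x h)
  · intro a ha k hk
    rcases Finset.mem_union.1 ha with h | h
    · exact c3 a h k ((descends_restrict (p := fun x => x < i) hpm hk (tlt a h)).2 S₁ hf1)
    · exact d3 a h k ((descends_restrict (p := fun x => i < x) hpp hk (ugt a h)).2 S₂ hf2)
  · intro a ha b hb he hpos k k' hk hk'
    rcases Finset.mem_union.1 ha with ha' | ha' <;> rcases Finset.mem_union.1 hb with hb' | hb'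
    · exact c4 a ha' b hb' he hpos k k'
        ((descends_restrict (p := fun x => x < i) hpm hk (tlt a ha')).2 S₁ hf1)
        ((descends_restrict (p := fun x => x < i) hpm hk' (tlt b hb')).2 S₁ hf1)
    · have hA : a.headStr = i :=
        le_antisymm (not_lt.1 (hhd1 a ha')) (he ▸ not_lt.1 (hhd2 b hb'))
      constructor
      · intro _ h2
        rw [← he, hA] at h2
        exact absurd h2 (asymm (ugt b hb'))
      · intro h1 _
        rw [hA] at h1
        exact absurd h1 (asymm (tlt a ha'))
    · have hA : a.headStr = i :=
        le_antisymm (he ▸ not_lt.1 (hhd1 b hb')) (not_lt.1 (hhd2 a ha'))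
      constructor
      · intro h1 _
        rw [hA] at h1
        exact absurd h1 (asymm (ugt a ha'))
      · intro _ h2
        rw [← he, hA] at h2
        exact absurd h2 (asymm (tlt b hb'))
    · exact d4 a ha' b hb' he hpos k k'
        ((descends_restrict (p := fun x => i < x) hpp hk (ugt a ha')).2 S₂ hf2)
        ((descends_restrict (p := fun x => i < x) hpp hk' (ugt b hb')).2 S₂ hf2)

private lemma weight_split {S₁ S₂ : Finset (GArrow n)} (h : Disjoint S₁ S₂) :
    treeSign (S₁ ∪ S₂) * ∏ a ∈ S₁ ∪ S₂, a.sign =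
      (treeSign S₁ * ∏ a ∈ S₁, a.sign) * (treeSign S₂ * ∏ a ∈ S₂, a.sign) := by
  rw [treeSign, treeSign, treeSign, Finset.filter_union,
    Finset.card_union_of_disjoint (Finset.disjoint_filter_filter h),
    pow_add, Finset.prod_union h]
  ring

end FactorizationHelpers

/-- **Factorization at an interior trunk.**  Let `I = {i₁ < … < i_r}` and let
`i = i_k ∈ I` with `1 < k < r` (that is, `I` contains elements both below and
above `i`).  Then `Z_{I∖{i}, i}(G) = Z_{I⁻, i}(G) · Z_{I⁺, i}(G)` where
`I⁻ = {x ∈ I : x < i}` and `I⁺ = {x ∈ I : x > i}`. -/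
theorem factorization_interior_trunk {n : ℕ} (G : GaussDiagram n)
    (I : Finset (Fin n)) (i : Fin n) (hi : i ∈ I)
    (hlow : ∃ a ∈ I, a < i) (hhigh : ∃ b ∈ I, i < b) :
    Z (I.erase i) i G = Z (I.filter (· < i)) i G * Z (I.filter (i < ·)) i G := by
  classical
  have hiL : i ∉ I.erase i := Finset.notMem_erase i I
  have hfe1 : (I.erase i).filter (fun x => x < i) = I.filter (· < i) := by
    ext x
    simp only [Finset.mem_filter, Finset.mem_erase]
    exact ⟨fun h => ⟨h.1.2, h.2⟩, fun h => ⟨⟨ne_of_lt h.2, h.1⟩, h.2⟩⟩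
  have hfe2 : (I.erase i).filter (fun x => i < x) = I.filter (i < ·) := by
    ext x
    simp only [Finset.mem_filter, Finset.mem_erase]
    exact ⟨fun h => ⟨h.1.2, h.2⟩, fun h => ⟨⟨ne_of_gt h.2, h.1⟩, h.2⟩⟩
  have hU : I.filter (· < i) ∪ I.filter (i < ·) = I.erase i := by
    ext x
    simp only [Finset.mem_union, Finset.mem_filter, Finset.mem_erase]
    constructor
    · rintro (⟨h, hx⟩ | ⟨h, hx⟩)
      · exact ⟨ne_of_lt hx, h⟩
      · exact ⟨ne_of_gt hx, h⟩
    · rintro ⟨hne, hx⟩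
      rcases lt_or_gt_of_ne hne with h | h
      · exact Or.inl ⟨hx, h⟩
      · exact Or.inr ⟨hx, h⟩
  have key : ∀ J : Finset (Fin n), Z J i G =
      ∑ S ∈ G.arrows.powerset.filter (fun S => IsPlanarTreeDiagram J i S),
        treeSign S * ∏ a ∈ S, a.sign := by
    intro J
    exact (Finset.sum_filter _ _).symm
  rw [key, key, key, Finset.sum_mul_sum, ← Finset.sum_product']
  refine Finset.sum_bij'
    (fun S _ => (S.filter fun a => a.tailStr < i, S.filter fun a => i < a.tailStr))
    (fun P _ => P.1 ∪ P.2) ?_ ?_ ?_ ?_ ?_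
  · intro S hS
    obtain ⟨hSp, hpl⟩ := Finset.mem_filter.1 hS
    have hside := planar_side hpl hiL
    have htails : ∀ a ∈ S, a.tailStr ≠ i := fun a ha h =>
      hiL (h ▸ hpl.1.2.2.1 a ha)
    have hside' : ∀ a ∈ S, a.headStr ≠ i → ((i < a.tailStr) ↔ (i < a.headStr)) := by
      intro a ha hne
      have h := hside a ha hne
      have h1 := htails a ha
      constructor
      · intro hlt
        rcases lt_trichotomy i a.headStr with h' | h' | h'
        · exact h'
        · exact absurd h'.symm hne
        · exact absurd (h.2 h') (asymm hlt)
      · intro hlt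
        rcases lt_trichotomy i a.tailStr with h' | h' | h'
        · exact h'
        · exact absurd h'.symm h1
        · exact absurd hlt (asymm (h.1 h'))
    have h1 := restrict_planar hpl hiL (p := fun x => x < i) hside (lt_irrefl i)
      (L' := I.filter (· < i)) (S' := S.filter fun a => a.tailStr < i)
      (fun x => by
        simp only [Finset.mem_filter, Finset.mem_erase]
        exact ⟨fun h => ⟨⟨ne_of_lt h.2, h.1⟩, h.2⟩, fun h => ⟨h.1.2, h.2⟩⟩)
      (fun a => Finset.mem_filter)
    have h2 := restrict_planar hpl hiL (p := fun x => i < x) hside' (lt_irrefl i)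
      (L' := I.filter (i < ·)) (S' := S.filter fun a => i < a.tailStr)
      (fun x => by
        simp only [Finset.mem_filter, Finset.mem_erase]
        exact ⟨fun h => ⟨⟨ne_of_gt h.2, h.1⟩, h.2⟩, fun h => ⟨h.1.2, h.2⟩⟩)
      (fun a => Finset.mem_filter)
    refine Finset.mem_product.2 ⟨Finset.mem_filter.2 ⟨?_, h1⟩, Finset.mem_filter.2 ⟨?_, h2⟩⟩
    · exact Finset.mem_powerset.2
        ((Finset.filter_subset _ _).trans (Finset.mem_powerset.1 hSp))
    · exact Finset.mem_powerset.2
        ((Finset.filter_subset _ _).trans (Finset.mem_powerset.1 hSp))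
  · intro P hP
    obtain ⟨h1, h2⟩ := Finset.mem_product.1 hP
    obtain ⟨h1p, h1pl⟩ := Finset.mem_filter.1 h1
    obtain ⟨h2p, h2pl⟩ := Finset.mem_filter.1 h2
    have hu := union_planar h1pl h2pl (fun x hx => (Finset.mem_filter.1 hx).2)
      (fun x hx => (Finset.mem_filter.1 hx).2)
    rw [hU] at hu
    exact Finset.mem_filter.2 ⟨Finset.mem_powerset.2
      (Finset.union_subset (Finset.mem_powerset.1 h1p) (Finset.mem_powerset.1 h2p)), hu⟩
  · intro S hS
    obtain ⟨_, hpl⟩ := Finset.mem_filter.1 hS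
    have htails : ∀ a ∈ S, a.tailStr ≠ i := fun a ha h =>
      hiL (h ▸ hpl.1.2.2.1 a ha)
    ext a
    simp only [Finset.mem_union, Finset.mem_filter]
    constructor
    · rintro (⟨h, _⟩ | ⟨h, _⟩) <;> exact h
    · intro h
      rcases lt_or_gt_of_ne (htails a h) with h' | h'
      · exact Or.inl ⟨h, h'⟩
      · exact Or.inr ⟨h, h'⟩
  · intro P hP
    obtain ⟨h1, h2⟩ := Finset.mem_product.1 hP
    have h1pl := (Finset.mem_filter.1 h1).2
    have h2pl := (Finset.mem_filter.1 h2).2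
    have t1 : ∀ a ∈ P.1, a.tailStr < i := fun a ha =>
      (Finset.mem_filter.1 (h1pl.1.2.2.1 a ha)).2
    have t2 : ∀ a ∈ P.2, i < a.tailStr := fun a ha =>
      (Finset.mem_filter.1 (h2pl.1.2.2.1 a ha)).2
    have e1 : (P.1 ∪ P.2).filter (fun a => a.tailStr < i) = P.1 := by
      ext a
      simp only [Finset.mem_filter, Finset.mem_union]
      constructor
      · rintro ⟨h | h, hlt⟩
        · exact h
        · exact absurd hlt (asymm (t2 a h))
      · intro h
        exact ⟨Or.inl h, t1 a h⟩
    have e2 : (P.1 ∪ P.2).filter (fun a => i < a.tailStr) = P.2 := by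
      ext a
      simp only [Finset.mem_filter, Finset.mem_union]
      constructor
      · rintro ⟨h | h, hlt⟩
        · exact absurd hlt (asymm (t1 a h))
        · exact h
      · intro h
        exact ⟨Or.inr h, t2 a h⟩
    rw [Prod.ext_iff]
    exact ⟨e1, e2⟩
  · intro S hS
    obtain ⟨_, hpl⟩ := Finset.mem_filter.1 hS
    have htails : ∀ a ∈ S, a.tailStr ≠ i := fun a ha h =>
      hiL (h ▸ hpl.1.2.2.1 a ha)
    have hdisj : Disjoint (S.filter fun a => a.tailStr < i)
        (S.filter fun a => i < a.tailStr) := by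
      rw [Finset.disjoint_left]
      intro a ha hb
      exact absurd (Finset.mem_filter.1 hb).2 (asymm (Finset.mem_filter.1 ha).2)
    have hue : (S.filter fun a => a.tailStr < i) ∪ (S.filter fun a => i < a.tailStr) = S := by
      ext a
      simp only [Finset.mem_union, Finset.mem_filter]
      constructor
      · rintro (⟨h, _⟩ | ⟨h, _⟩) <;> exact h
      · intro h
        rcases lt_or_gt_of_ne (htails a h) with h' | h'
        · exact Or.inl ⟨h, h'⟩
        · exact Or.inr ⟨h, h'⟩
    conv_lhs => rw [← hue]
    exact weight_split hdisj
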